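/- Let Θ be a nonempty set, and let R_n, R : Ω × Θ → ℝ be (possibly random) functions on a probability space. Suppose (i) θ* : Ω → Θ is identifiably unique for R: for every ε > 0, inf_{θ ∈ Θ : d(θ, θ*(ω)) ≥ ε} R(ω, θ) − R(ω, θ*(ω)) > 0 almost surely; and (ii) sup_{θ ∈ Θ} |R_n(ω, θ) − R(ω, θ)| → 0 almost surely as n → ∞. Then for any sequence of measurable minimizers θ̂_n with R_n(ω, θ̂_n(ω)) = inf_{θ ∈ Θ} R_n(ω, θ) eventually, we have θ̂_n → θ* almost surely. -/
import Mathlib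


open MeasureTheory Filter

/-- Consistency of M-estimators with a stochastic limiting objective function and a
stochastic, identifiably unique minimizer (Proposition C.1 of Kuersteiner–Prucha). -/
theorem consistency_random_limit_objective
    {Ω : Type*} {mΩ : MeasurableSpace Ω} (μ : Measure Ω) [IsProbabilityMeasure μ]
    {Θ : Type*} [MetricSpace Θ] [Nonempty Θ] [MeasurableSpace Θ]
    (Rn : ℕ → Ω → Θ → ℝ) (R : Ω → Θ → ℝ)
    (θstar : Ω → Θ) (θhat : ℕ → Ω → Θ)
    (hθhat_meas : ∀ n, Measurable (θhat n))
    -- identifiable uniqueness: for every ε > 0, a.s.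
    -- `inf_{dist(θ, θ*) ≥ ε} (R(ω,θ) - R(ω,θ*(ω))) > 0`
    (hid : ∀ ε : ℝ, 0 < ε → ∀ᵐ ω ∂μ, ∃ δ : ℝ, 0 < δ ∧
      ∀ θ : Θ, ε ≤ dist θ (θstar ω) → δ ≤ R ω θ - R ω (θstar ω))
    -- a.s. uniform convergence of the objective functions
    (hunif : ∀ᵐ ω ∂μ, ∀ ε : ℝ, 0 < ε → ∃ N : ℕ, ∀ n ≥ N, ∀ θ : Θ,
      |Rn n ω θ - R ω θ| < ε)
    -- `θhat n` eventually minimizes `Rn n`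
    (hmin : ∀ᵐ ω ∂μ, ∃ N : ℕ, ∀ n ≥ N, ∀ θ : Θ, Rn n ω (θhat n ω) ≤ Rn n ω θ) :
    ∀ᵐ ω ∂μ, Tendsto (fun n => θhat n ω) atTop (nhds (θstar ω)) := by
  have hidc : ∀ᵐ ω ∂μ, ∀ k : ℕ, ∃ δ : ℝ, 0 < δ ∧
      ∀ θ : Θ, 1 / (k + 1 : ℝ) ≤ dist θ (θstar ω) → δ ≤ R ω θ - R ω (θstar ω) := by
    rw [ae_all_iff]
    intro k
    exact hid _ (by positivity)
  filter_upwards [hidc, hunif, hmin] with ω hidω hunifω hminω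
  rw [Metric.tendsto_atTop]
  intro ε hε
  obtain ⟨k, hk⟩ := exists_nat_one_div_lt hε
  obtain ⟨δ, hδ, hδbound⟩ := hidω k
  obtain ⟨N₁, hN₁⟩ := hunifω (δ / 3) (by linarith)
  obtain ⟨N₂, hN₂⟩ := hminω
  refine ⟨max N₁ N₂, fun n hn => ?_⟩
  have hn₁ := le_trans (le_max_left _ _) hn
  have hn₂ := le_trans (le_max_right _ _) hn
  by_contra hcon
  push_neg at hcon
  have hd : 1 / (k + 1 : ℝ) ≤ dist (θhat n ω) (θstar ω) := le_trans hk.le hcon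
  have h1 := hδbound _ hd
  have h2 := hN₁ n hn₁ (θhat n ω)
  have h3 := hN₁ n hn₁ (θstar ω)
  have h4 := hN₂ n hn₂ (θstar ω)
  rw [abs_lt] at h2 h3
  linarith [h2.1, h2.2, h3.1, h3.2]
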